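/- Let g ≥ 0 and n ≥ 0 be integers with (g, n) ≠ (0, 3), let p₁ ≤ p₂ ≤ … ≤ pₙ be integers each ≥ 2, and let d ≥ 1 be an integer divisible by each pᵢ. Then (2g − 2 + Σᵢ₌₁ⁿ (1 − 1/pᵢ))·d = 1 (as rational numbers) holds if and only if the data (g; p₁,…,pₙ; d) is one of the following four: (0; 2,2,2,3; 6), (0; 2,2,2,4; 4), (0; 2,2,2,2,2; 2), (1; 2; 2). -/

import Mathlib

private lemma unfold_sum (l : List ℕ) :
    (l.map fun q => 1 - 1/(q:ℚ)).sum = (List.map (fun q : ℕ => 1 - 1/(q:ℚ)) l).sum := by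
  induction l with
  | nil => rfl
  | cons a t ih =>
    simp only [List.pure_def, List.bind_eq_flatMap, List.flatMap_cons, List.map_append,
      List.sum_append, List.map_cons, List.sum_cons, List.map_nil, List.sum_nil,
      add_zero] at *
    rw [ih]

private lemma sum_half_le (l : List ℕ) (h : ∀ q ∈ l, 2 ≤ q) :
    (l.length : ℚ) / 2 ≤ (List.map (fun q : ℕ => 1 - 1/(q:ℚ)) l).sum := by
  induction l with
  | nil => simp
  | cons a t ih =>
    have ha : (2:ℚ) ≤ (a:ℚ) := by exact_mod_cast h a List.mem_cons_self
    have h1 : 1/(a:ℚ) ≤ 1/2 := one_div_le_one_div_of_le (by norm_num) ha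
    have h2 := ih (fun q hq => h q (List.mem_cons_of_mem a hq))
    simp only [List.map_cons, List.sum_cons, List.length_cons]
    push_cast
    linarith

/-- Table 2 of the paper (non-hypergeometric case): for a genus `g ≥ 0`, a sorted list
`p = [p₁, …, pₙ]` of orbifold orders `pᵢ ≥ 2` (with `(g, n) ≠ (0, 3)`), and a degree `d ≥ 1`
divisible by each `pᵢ`, the Riemann–Hurwitz identity `(2g - 2 + Σ (1 - 1/pᵢ)) * d = 1`
holds iff the data is one of `(0; 2,2,2,3; 6)`, `(0; 2,2,2,4; 4)`, `(0; 2,2,2,2,2; 2)`,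
`(1; 2; 2)`. -/
theorem stmt4 (g : ℕ) (p : List ℕ) (d : ℕ)
    (hne : ¬(g = 0 ∧ p.length = 3))
    (hsorted : p.Pairwise (· ≤ ·))
    (hp2 : ∀ q ∈ p, 2 ≤ q)
    (hd : 1 ≤ d)
    (hdvd : ∀ q ∈ p, q ∣ d) :
    ((2 * (g:ℚ) - 2 + (p.map fun q => 1 - 1/(q:ℚ)).sum) * (d:ℚ) = 1) ↔
    ((g = 0 ∧ p = [2, 2, 2, 3] ∧ d = 6) ∨
     (g = 0 ∧ p = [2, 2, 2, 4] ∧ d = 4) ∨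
     (g = 0 ∧ p = [2, 2, 2, 2, 2] ∧ d = 2) ∨
     (g = 1 ∧ p = [2] ∧ d = 2)) := by
  have hd0 : (0:ℚ) < (d:ℚ) := by exact_mod_cast hd
  rw [unfold_sum]
  constructor
  · intro heq
    have hinv : 2*(g:ℚ) - 2 + (List.map (fun q : ℕ => 1 - 1/(q:ℚ)) p).sum = 1/(d:ℚ) := by
      rw [eq_div_iff (ne_of_gt hd0)]; exact heq
    have hsum := sum_half_le p hp2
    have hd1 : 1/(d:ℚ) ≤ 1 := by
      rw [div_le_one hd0]; exact_mod_cast hd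
    have hdpos : 0 < 1/(d:ℚ) := by positivity
    have hg1 : g ≤ 1 := by
      by_contra hg
      have h2g : (2:ℚ) ≤ (g:ℚ) := by exact_mod_cast (by omega : 2 ≤ g)
      have h0 : (0:ℚ) ≤ (p.length:ℚ)/2 := by positivity
      linarith
    interval_cases g
    · -- g = 0
      rw [Nat.cast_zero] at hinv
      have hlen : p.length ≤ 6 := by
        have : (p.length:ℚ) ≤ 6 := by linarith
        exact_mod_cast this
      rcases p with _ | ⟨a, _ | ⟨b, _ | ⟨c, _ | ⟨e, _ | ⟨f, _ | ⟨k, _ | ⟨m, t⟩⟩⟩⟩⟩⟩⟩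
      · -- n = 0
        simp only [List.map_nil, List.sum_nil, add_zero] at hinv; linarith
      · -- n = 1
        simp only [List.map_cons, List.map_nil, List.sum_cons, List.sum_nil, add_zero] at hinv
        have ha2 : 2 ≤ a := hp2 a (by simp)
        have haq : (2:ℚ) ≤ (a:ℚ) := by exact_mod_cast ha2
        have ha0 : 0 < 1/(a:ℚ) := one_div_pos.mpr (by linarith)
        linarith
      · -- n = 2
        simp only [List.map_cons, List.map_nil, List.sum_cons, List.sum_nil, add_zero] at hinv
        have ha2 : 2 ≤ a := hp2 a (by simp)
        have hb2 : 2 ≤ b := hp2 b (by simp)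
        have haq : (2:ℚ) ≤ (a:ℚ) := by exact_mod_cast ha2
        have hbq : (2:ℚ) ≤ (b:ℚ) := by exact_mod_cast hb2
        have ha0 : 0 < 1/(a:ℚ) := one_div_pos.mpr (by linarith)
        have hb0 : 0 < 1/(b:ℚ) := one_div_pos.mpr (by linarith)
        linarith
      · -- n = 3 : excluded
        exact absurd ⟨rfl, rfl⟩ hne
      · -- n = 4 : main case
        simp only [List.map_cons, List.map_nil, List.sum_cons, List.sum_nil, add_zero] at hinv
        simp only [List.pairwise_cons, List.mem_cons, List.not_mem_nil, List.mem_singleton] at hsorted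
        obtain ⟨hs1, hs2, hs3, -⟩ := hsorted
        have hab : a ≤ b := hs1 b (by simp)
        have hbc : b ≤ c := hs2 c (by simp)
        have hce : c ≤ e := hs3 e (by simp)
        have ha2 : 2 ≤ a := hp2 a (by simp)
        have hb2 : 2 ≤ b := hp2 b (by simp)
        have hc2 : 2 ≤ c := hp2 c (by simp)
        have he2 : 2 ≤ e := hp2 e (by simp)
        have had : a ∣ d := hdvd a (by simp)
        have hbd : b ∣ d := hdvd b (by simp)
        have hcd : c ∣ d := hdvd c (by simp)
        have hed : e ∣ d := hdvd e (by simp)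
        have hda : a ≤ d := Nat.le_of_dvd (by omega) had
        have hdb : b ≤ d := Nat.le_of_dvd (by omega) hbd
        have hdc : c ≤ d := Nat.le_of_dvd (by omega) hcd
        have hde : e ≤ d := Nat.le_of_dvd (by omega) hed
        have ha : a = 2 := by
          by_contra h
          have h3 : (3:ℚ) ≤ (a:ℚ) := by exact_mod_cast (by omega : 3 ≤ a)
          have hb3 : (3:ℚ) ≤ (b:ℚ) := by exact_mod_cast (by omega : 3 ≤ b)
          have hc3 : (3:ℚ) ≤ (c:ℚ) := by exact_mod_cast (by omega : 3 ≤ c)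
          have he3 : (3:ℚ) ≤ (e:ℚ) := by exact_mod_cast (by omega : 3 ≤ e)
          have i1 := one_div_le_one_div_of_le (by norm_num : (0:ℚ) < 3) h3
          have i2 := one_div_le_one_div_of_le (by norm_num : (0:ℚ) < 3) hb3
          have i3 := one_div_le_one_div_of_le (by norm_num : (0:ℚ) < 3) hc3
          have i4 := one_div_le_one_div_of_le (by norm_num : (0:ℚ) < 3) he3
          have hdq : (2:ℚ) ≤ (d:ℚ) := by exact_mod_cast (by omega : 2 ≤ d)
          have id2 := one_div_le_one_div_of_le (by norm_num : (0:ℚ) < 2) hdq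
          linarith
        subst ha
        simp only [Nat.cast_ofNat] at hinv
        have hb : b = 2 := by
          by_contra h
          have hb3 : (3:ℚ) ≤ (b:ℚ) := by exact_mod_cast (by omega : 3 ≤ b)
          have hc3 : (3:ℚ) ≤ (c:ℚ) := by exact_mod_cast (by omega : 3 ≤ c)
          have he3 : (3:ℚ) ≤ (e:ℚ) := by exact_mod_cast (by omega : 3 ≤ e)
          have hd3 : (3:ℚ) ≤ (d:ℚ) := by exact_mod_cast (by omega : 3 ≤ d)
          have i2 := one_div_le_one_div_of_le (by norm_num : (0:ℚ) < 3) hb3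
          have i3 := one_div_le_one_div_of_le (by norm_num : (0:ℚ) < 3) hc3
          have i4 := one_div_le_one_div_of_le (by norm_num : (0:ℚ) < 3) he3
          have id3 := one_div_le_one_div_of_le (by norm_num : (0:ℚ) < 3) hd3
          linarith
        subst hb
        have hc : c = 2 := by
          by_contra h
          have hc3 : (3:ℚ) ≤ (c:ℚ) := by exact_mod_cast (by omega : 3 ≤ c)
          have he3 : (3:ℚ) ≤ (e:ℚ) := by exact_mod_cast (by omega : 3 ≤ e)
          have i3 := one_div_le_one_div_of_le (by norm_num : (0:ℚ) < 3) hc3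
          have i4 := one_div_le_one_div_of_le (by norm_num : (0:ℚ) < 3) he3
          -- 1/c + 1/e = 1 - 1/d , LHS ≤ 2/3 ⟹ 1/d ≥ 1/3 ⟹ d ≤ 3
          have h13 : (1:ℚ)/3 ≤ 1/(d:ℚ) := by linarith
          have hd3 : (d:ℚ) ≤ 3 :=
            le_of_one_div_le_one_div (by norm_num : (0:ℚ) < 3) h13
          have hd3' : d ≤ 3 := by exact_mod_cast hd3
          -- but 2 ∣ d and c ≤ d with c ≥ 3, so d = 3 and 2 ∣ 3
          have : d = 3 := by omega
          rw [this] at had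
          omega
        subst hc
        simp only [Nat.cast_ofNat] at hinv
        -- hinv : 1/e + 1/d = 1/2 (in some form)
        have heq2 : (e:ℚ) ≤ (d:ℚ) := by exact_mod_cast hde
        have he0 : (0:ℚ) < (e:ℚ) := by
          have : (2:ℚ) ≤ (e:ℚ) := by exact_mod_cast he2
          linarith
        have ide := one_div_le_one_div_of_le he0 heq2
        have he4 : e ≤ 4 := by
          have h14 : (1:ℚ)/4 ≤ 1/(e:ℚ) := by linarith
          have : (e:ℚ) ≤ 4 :=
            le_of_one_div_le_one_div (by norm_num : (0:ℚ) < 4) h14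
          exact_mod_cast this
        have hdne : (d:ℚ) ≠ 0 := ne_of_gt hd0
        interval_cases e
        · -- e = 2 : 1/d = 0, impossible
          simp only [Nat.cast_ofNat] at hinv
          linarith
        · -- e = 3 : d = 6
          simp only [Nat.cast_ofNat] at hinv
          have hd6 : (d:ℚ) = 6 := by
            field_simp at hinv
            linarith
          have : d = 6 := by exact_mod_cast hd6
          left; exact ⟨rfl, rfl, this⟩
        · -- e = 4 : d = 4
          simp only [Nat.cast_ofNat] at hinv
          have hd4 : (d:ℚ) = 4 := by
            field_simp at hinv
            linarith
          have : d = 4 := by exact_mod_cast hd4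
          right; left; exact ⟨rfl, rfl, this⟩
      · -- n = 5
        simp only [List.map_cons, List.map_nil, List.sum_cons, List.sum_nil, add_zero] at hinv
        simp only [List.pairwise_cons, List.mem_cons, List.not_mem_nil, List.mem_singleton] at hsorted
        obtain ⟨hs1, hs2, hs3, hs4, -⟩ := hsorted
        have hab : a ≤ b := hs1 b (by simp)
        have hbc : b ≤ c := hs2 c (by simp)
        have hce : c ≤ e := hs3 e (by simp)
        have hef : e ≤ f := hs4 f (by simp)
        have ha2 : 2 ≤ a := hp2 a (by simp)
        have hf2 : 2 ≤ f := hp2 f (by simp)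
        have hfd : f ∣ d := hdvd f (by simp)
        have hdf : f ≤ d := Nat.le_of_dvd (by omega) hfd
        have haq : (2:ℚ) ≤ (a:ℚ) := by exact_mod_cast (by omega : 2 ≤ a)
        have hbq : (2:ℚ) ≤ (b:ℚ) := by exact_mod_cast (by omega : 2 ≤ b)
        have hcq : (2:ℚ) ≤ (c:ℚ) := by exact_mod_cast (by omega : 2 ≤ c)
        have heq' : (2:ℚ) ≤ (e:ℚ) := by exact_mod_cast (by omega : 2 ≤ e)
        have i1 := one_div_le_one_div_of_le (by norm_num : (0:ℚ) < 2) haq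
        have i2 := one_div_le_one_div_of_le (by norm_num : (0:ℚ) < 2) hbq
        have i3 := one_div_le_one_div_of_le (by norm_num : (0:ℚ) < 2) hcq
        have i4 := one_div_le_one_div_of_le (by norm_num : (0:ℚ) < 2) heq'
        have hf : f = 2 := by
          by_contra h
          have hf3 : (3:ℚ) ≤ (f:ℚ) := by exact_mod_cast (by omega : 3 ≤ f)
          have hd3 : (3:ℚ) ≤ (d:ℚ) := by exact_mod_cast (by omega : 3 ≤ d)
          have i5 := one_div_le_one_div_of_le (by norm_num : (0:ℚ) < 3) hf3
          have id3 := one_div_le_one_div_of_le (by norm_num : (0:ℚ) < 3) hd3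
          linarith
        have ha : a = 2 := by omega
        have hb : b = 2 := by omega
        have hc : c = 2 := by omega
        have he : e = 2 := by omega
        subst ha hb hc he hf
        simp only [Nat.cast_ofNat] at hinv
        have hdne : (d:ℚ) ≠ 0 := ne_of_gt hd0
        have hd2 : (d:ℚ) = 2 := by
          field_simp at hinv
          linarith
        have : d = 2 := by exact_mod_cast hd2
        right; right; left; exact ⟨rfl, rfl, this⟩
      · -- n = 6
        simp only [List.map_cons, List.map_nil, List.sum_cons, List.sum_nil, add_zero] at hinv
        have ha2 : 2 ≤ a := hp2 a (by simp)
        have had : a ∣ d := hdvd a (by simp)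
        have hda : a ≤ d := Nat.le_of_dvd (by omega) had
        have haq : (2:ℚ) ≤ (a:ℚ) := by exact_mod_cast hp2 a (by simp)
        have hbq : (2:ℚ) ≤ (b:ℚ) := by exact_mod_cast hp2 b (by simp)
        have hcq : (2:ℚ) ≤ (c:ℚ) := by exact_mod_cast hp2 c (by simp)
        have heq' : (2:ℚ) ≤ (e:ℚ) := by exact_mod_cast hp2 e (by simp)
        have hfq : (2:ℚ) ≤ (f:ℚ) := by exact_mod_cast hp2 f (by simp)
        have hkq : (2:ℚ) ≤ (k:ℚ) := by exact_mod_cast hp2 k (by simp)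
        have hdq : (2:ℚ) ≤ (d:ℚ) := by exact_mod_cast (by omega : 2 ≤ d)
        have i1 := one_div_le_one_div_of_le (by norm_num : (0:ℚ) < 2) haq
        have i2 := one_div_le_one_div_of_le (by norm_num : (0:ℚ) < 2) hbq
        have i3 := one_div_le_one_div_of_le (by norm_num : (0:ℚ) < 2) hcq
        have i4 := one_div_le_one_div_of_le (by norm_num : (0:ℚ) < 2) heq'
        have i5 := one_div_le_one_div_of_le (by norm_num : (0:ℚ) < 2) hfq
        have i6 := one_div_le_one_div_of_le (by norm_num : (0:ℚ) < 2) hkq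
        have id2 := one_div_le_one_div_of_le (by norm_num : (0:ℚ) < 2) hdq
        linarith
      · -- n ≥ 7 : impossible
        simp only [List.length_cons] at hlen
        omega
    · -- g = 1
      rw [Nat.cast_one] at hinv
      have hlen : p.length ≤ 2 := by
        have : (p.length:ℚ) ≤ 2 := by linarith
        exact_mod_cast this
      rcases p with _ | ⟨a, _ | ⟨b, t⟩⟩
      · -- n = 0
        simp only [List.map_nil, List.sum_nil, add_zero] at hinv
        linarith
      · -- n = 1
        simp only [List.map_cons, List.map_nil, List.sum_cons, List.sum_nil, add_zero] at hinv
        have ha2 : 2 ≤ a := hp2 a (by simp)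
        have had : a ∣ d := hdvd a (by simp)
        have hda : a ≤ d := Nat.le_of_dvd (by omega) had
        have haq : (2:ℚ) ≤ (a:ℚ) := by exact_mod_cast ha2
        have i1 := one_div_le_one_div_of_le (by norm_num : (0:ℚ) < 2) haq
        -- hinv : 1 - 1/a = 1/d, so 1/d ≥ 1/2, d ≤ 2
        have h12 : (1:ℚ)/2 ≤ 1/(d:ℚ) := by linarith
        have hd2 : (d:ℚ) ≤ 2 :=
          le_of_one_div_le_one_div (by norm_num : (0:ℚ) < 2) h12
        have hd2' : d ≤ 2 := by exact_mod_cast hd2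
        have hdd : d = 2 := by omega
        have haa : a = 2 := by omega
        subst haa hdd
        right; right; right; exact ⟨rfl, rfl, rfl⟩
      · -- n = 2 or more
        simp only [List.length_cons] at hlen
        have ht : t = [] := List.length_eq_zero_iff.mp (by omega)
        subst ht
        simp only [List.map_cons, List.map_nil, List.sum_cons, List.sum_nil, add_zero] at hinv
        have ha2 : 2 ≤ a := hp2 a (by simp)
        have had : a ∣ d := hdvd a (by simp)
        have hda : a ≤ d := Nat.le_of_dvd (by omega) had
        have haq : (2:ℚ) ≤ (a:ℚ) := by exact_mod_cast ha2
        have hbq : (2:ℚ) ≤ (b:ℚ) := by exact_mod_cast hp2 b (by simp)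
        have hdq : (2:ℚ) ≤ (d:ℚ) := by exact_mod_cast (by omega : 2 ≤ d)
        have i1 := one_div_le_one_div_of_le (by norm_num : (0:ℚ) < 2) haq
        have i2 := one_div_le_one_div_of_le (by norm_num : (0:ℚ) < 2) hbq
        have id2 := one_div_le_one_div_of_le (by norm_num : (0:ℚ) < 2) hdq
        linarith
  · rintro (⟨rfl, rfl, rfl⟩ | ⟨rfl, rfl, rfl⟩ | ⟨rfl, rfl, rfl⟩ | ⟨rfl, rfl, rfl⟩) <;> norm_num
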